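/- Let f : A → B and g : A → C be surjective group homomorphisms, let D together with g' : B → D and f' : C → D be the pushout of f and g in the category of groups, and let h := g' ∘ f = f' ∘ g : A → D be the diagonal. Then the kernel of h equals the join of the kernels of f and g, i.e. ker h = ker f ⊔ ker g (the subgroup generated by ker f and ker g, which equals the product ker f · ker g since both are normal). -/
import Mathlib


universe u

/-- For surjective group homomorphisms `f : A → B` and `g : A → C` with pushout `D`
(structure maps `g' : B → D`, `f' : C → D`), the kernel of the diagonal
`h = g' ∘ f = f' ∘ g` is the join of the kernels of `f` and `g`. -/
theorem ker_diagonal_of_pushout_eq_sup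
    {A B C D : Type u} [Group A] [Group B] [Group C] [Group D]
    (f : A →* B) (g : A →* C)
    (hf : Function.Surjective f) (hg : Function.Surjective g)
    (g' : B →* D) (f' : C →* D)
    (hcomm : g'.comp f = f'.comp g)
    (huniv : ∀ (E : Type u) [Group E] (u : B →* E) (v : C →* E),
      u.comp f = v.comp g → ∃! w : D →* E, w.comp g' = u ∧ w.comp f' = v) :
    (g'.comp f).ker = f.ker ⊔ g.ker := by
  have hcomm' : ∀ a : A, g' (f a) = f' (g a) := fun a => DFunLike.congr_fun hcomm a
  apply le_antisymm
  · -- ker (g' ∘ f) ≤ ker f ⊔ ker g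
    set N := f.ker ⊔ g.ker with hN
    let π : A →* A ⧸ N := QuotientGroup.mk' N
    have hkerπ : π.ker = N := QuotientGroup.ker_mk' N
    obtain ⟨finv, hfinv⟩ := hf.hasRightInverse
    obtain ⟨ginv, hginv⟩ := hg.hasRightInverse
    have hfker : f.ker ≤ π.ker := by rw [hkerπ]; exact le_sup_left
    have hgker : g.ker ≤ π.ker := by rw [hkerπ]; exact le_sup_right
    let u : B →* A ⧸ N := f.liftOfRightInverse finv hfinv ⟨π, hfker⟩
    let v : C →* A ⧸ N := g.liftOfRightInverse ginv hginv ⟨π, hgker⟩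
    have hu : ∀ a, u (f a) = π a := fun a =>
      f.liftOfRightInverse_comp_apply finv hfinv ⟨π, hfker⟩ a
    have hv : ∀ a, v (g a) = π a := fun a =>
      g.liftOfRightInverse_comp_apply ginv hginv ⟨π, hgker⟩ a
    have hcompat : u.comp f = v.comp g := by
      ext a; simp [hu a, hv a]
    obtain ⟨w, ⟨hw1, hw2⟩, _⟩ := huniv (A ⧸ N) u v hcompat
    intro a ha
    have : π a = 1 := by
      have : w (g' (f a)) = u (f a) := DFunLike.congr_fun hw1 (f a)
      rw [hu a] at this
      rw [← this]
      have ha1 : g' (f a) = 1 := ha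
      rw [ha1, map_one]
    rwa [← hkerπ]
  · apply sup_le
    · intro a ha
      have : f a = 1 := ha
      show g' (f a) = 1
      rw [this, map_one]
    · intro a ha
      have : g a = 1 := ha
      show g' (f a) = 1
      rw [hcomm' a, this, map_one]
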